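/- Let n ≥ 1 and let S be an n×n complex matrix that is unitary and symmetric (Sᵀ = S), such that S_{0j} is a strictly positive real number for every j ∈ {0,…,n−1}. Suppose moreover that for all k, j, l the Verlinde number Σ_m S_{km}·S_{jm}·conj(S_{lm}) / S_{0m} is a nonnegative real number. Then for all k and i one has S_{00}·|S_{ki}| ≤ S_{0k}·S_{0i}. -/

import Mathlib

open Complex Finset

/-- For a unitary symmetric modular S-matrix with positive real first row and nonnegative
real Verlinde numbers, `S_{00} |S_{ki}| ≤ S_{0k} S_{0i}`. -/
theorem stmt_4 (n : ℕ) (hn : 1 ≤ n) (S : Matrix (Fin n) (Fin n) ℂ)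
    (hU : S ∈ Matrix.unitaryGroup (Fin n) ℂ)
    (hsym : S.transpose = S)
    (hpos : ∀ j, 0 < (S ⟨0, hn⟩ j).re ∧ (S ⟨0, hn⟩ j).im = 0)
    (hVer : ∀ k j l,
      0 ≤ (∑ m, S k m * S j m * (starRingEnd ℂ) (S l m) / S ⟨0, hn⟩ m).re ∧
        (∑ m, S k m * S j m * (starRingEnd ℂ) (S l m) / S ⟨0, hn⟩ m).im = 0)
    (k i : Fin n) :
    (S ⟨0, hn⟩ ⟨0, hn⟩).re * ‖S k i‖ ≤ (S ⟨0, hn⟩ k).re * (S ⟨0, hn⟩ i).re := by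
  classical
  set z : Fin n := ⟨0, hn⟩ with hz
  set a : Fin n → ℝ := fun j => (S z j).re with ha
  have hapos : ∀ j, 0 < a j := fun j => (hpos j).1
  have hSreal : ∀ j, S z j = ((a j : ℝ) : ℂ) := by
    intro j
    exact Complex.ext (by simp [ha]) (by simp [(hpos j).2])
  have hST : ∀ p q, S p q = S q p := by
    intro p q
    conv_lhs => rw [← hsym]
    rfl
  have horth : ∀ p q, ∑ m, S p m * (starRingEnd ℂ) (S q m) = if p = q then 1 else 0 := by
    intro p q
    have h1 : S * star S = 1 := Matrix.mem_unitaryGroup_iff.mp hU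
    have h2 : (S * star S) p q = (1 : Matrix (Fin n) (Fin n) ℂ) p q := by rw [h1]
    rw [Matrix.mul_apply] at h2
    simpa [Matrix.star_apply, Matrix.one_apply] using h2
  set Ver : Fin n → Fin n → Fin n → ℂ :=
    fun p q r => ∑ m, S p m * S q m * (starRingEnd ℂ) (S r m) / S z m with hVdef
  set Nr : Fin n → Fin n → Fin n → ℝ := fun p q r => (Ver p q r).re with hNdef
  have hVre : ∀ p q r, Ver p q r = ((Nr p q r : ℝ) : ℂ) := by
    intro p q r
    exact Complex.ext (by simp [hNdef]) (by simpa [hVdef] using (hVer p q r).2)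
  have hNnonneg : ∀ p q r, 0 ≤ Nr p q r := fun p q r => (hVer p q r).1
  have habs : ∀ j, ‖S z j‖ = a j := by
    intro j
    rw [hSreal j, Complex.norm_real, Real.norm_eq_abs, abs_of_pos (hapos j)]
  -- right eigenvector identity
  have hA : ∀ j, ∑ l, Ver k j l * S i l = S k i * S j i / S z i := by
    intro j
    have h1 : ∑ l, Ver k j l * S i l
        = ∑ m, S k m * S j m / S z m * ∑ l, S i l * (starRingEnd ℂ) (S m l) := by
      simp only [hVdef, Finset.sum_mul, Finset.mul_sum]
      rw [Finset.sum_comm]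
      refine Finset.sum_congr rfl fun m _ => Finset.sum_congr rfl fun l _ => ?_
      rw [hST l m]
      ring
    rw [h1]
    have h2 : ∀ m ∈ Finset.univ, S k m * S j m / S z m * ∑ l, S i l * (starRingEnd ℂ) (S m l)
        = S k m * S j m / S z m * (if i = m then 1 else 0) := by
      intro m _
      rw [horth i m]
    rw [Finset.sum_congr rfl h2]
    simp
  -- left eigenvector identity
  have hB : ∀ l, ∑ j, S z j * Ver k j l = S z k * S z l / S z z := by
    intro l
    have hconj : ∀ j, Ver k j l
        = ∑ m, (starRingEnd ℂ) (S k m) * (starRingEnd ℂ) (S j m) * S l m / S z m := by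
      intro j
      have h0 : Ver k j l = (starRingEnd ℂ) (Ver k j l) := by
        rw [hVre k j l]; simp
      rw [h0, hVdef]
      simp only [map_sum, map_div₀, map_mul, Complex.conj_conj]
      refine Finset.sum_congr rfl fun m _ => ?_
      rw [hSreal m, Complex.conj_ofReal]
    have h1 : ∑ j, S z j * Ver k j l
        = ∑ m, (starRingEnd ℂ) (S k m) * S l m / S z m * ∑ j, S z j * (starRingEnd ℂ) (S m j) := by
      simp only [hconj, Finset.mul_sum]
      rw [Finset.sum_comm]
      refine Finset.sum_congr rfl fun m _ => Finset.sum_congr rfl fun j _ => ?_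
      rw [hST j m]
      ring
    rw [h1]
    have h2 : ∀ m ∈ Finset.univ,
        (starRingEnd ℂ) (S k m) * S l m / S z m * ∑ j, S z j * (starRingEnd ℂ) (S m j)
        = (starRingEnd ℂ) (S k m) * S l m / S z m * (if z = m then 1 else 0) := by
      intro m _
      rw [horth z m]
    rw [Finset.sum_congr rfl h2]
    simp only [mul_ite, mul_one, mul_zero, Finset.sum_ite_eq, Finset.mem_univ, if_true]
    rw [hST k z, hSreal k, Complex.conj_ofReal, ← hSreal k, hST l z]
  have hBre : ∀ l, ∑ j, a j * Nr k j l = a k * a l / a z := by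
    intro l
    have h := hB l
    simp only [hVre] at h
    rw [hSreal k, hSreal l, hSreal z] at h
    have h2 : ∑ j, ((a j : ℂ) * (Nr k j l : ℂ)) = ((a k : ℂ) * (a l : ℂ) / (a z : ℂ)) := by
      rw [← h]
      exact Finset.sum_congr rfl fun j _ => by rw [hSreal j]
    exact_mod_cast h2
  have key : ∀ j, ‖S k i‖ * ‖S i j‖ / a i
      ≤ ∑ l, Nr k j l * ‖S i l‖ := by
    intro j
    have h1 : ‖∑ l, Ver k j l * S i l‖
        = ‖S k i‖ * ‖S i j‖ / a i := by
      rw [hA j, hST j i, norm_div, norm_mul, habs i]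
    rw [← h1]
    refine le_trans (norm_sum_le _ _) (le_of_eq ?_)
    refine Finset.sum_congr rfl fun l _ => ?_
    rw [norm_mul, hVre k j l, Complex.norm_real, Real.norm_eq_abs, _root_.abs_of_nonneg (hNnonneg k j l)]
  set T : ℝ := ∑ l, a l * ‖S i l‖ with hT
  have hTpos : 0 < T := by
    obtain ⟨l, hl⟩ : ∃ l, S i l ≠ 0 := by
      by_contra h
      push_neg at h
      have h0 := horth i i
      simp [h] at h0
    have h1 : 0 < a l * ‖S i l‖ :=
      mul_pos (hapos l) (norm_pos_iff.mpr hl)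
    exact lt_of_lt_of_le h1 (Finset.single_le_sum
      (fun x _ => mul_nonneg (hapos x).le (norm_nonneg _)) (Finset.mem_univ l))
  have main : ‖S k i‖ / a i * T ≤ a k / a z * T := by
    calc ‖S k i‖ / a i * T
        = ∑ j, a j * (‖S k i‖ * ‖S i j‖ / a i) := by
          rw [hT, Finset.mul_sum]
          exact Finset.sum_congr rfl fun j _ => by ring
      _ ≤ ∑ j, a j * ∑ l, Nr k j l * ‖S i l‖ :=
          Finset.sum_le_sum fun j _ => mul_le_mul_of_nonneg_left (key j) (hapos j).le
      _ = ∑ l, (∑ j, a j * Nr k j l) * ‖S i l‖ := by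
          simp only [Finset.mul_sum, Finset.sum_mul]
          rw [Finset.sum_comm]
          exact Finset.sum_congr rfl fun l _ => Finset.sum_congr rfl fun j _ => by ring
      _ = ∑ l, a k * a l / a z * ‖S i l‖ := by
          exact Finset.sum_congr rfl fun l _ => by rw [hBre l]
      _ = a k / a z * T := by
          rw [hT, Finset.mul_sum]
          exact Finset.sum_congr rfl fun l _ => by ring
  have hdiv : ‖S k i‖ / a i ≤ a k / a z :=
    le_of_mul_le_mul_right main hTpos
  have hfin : ‖S k i‖ * a z ≤ a k * a i :=
    (div_le_div_iff₀ (hapos i) (hapos z)).mp hdiv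
  show a z * ‖S k i‖ ≤ a k * a i
  linarith [hfin]
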